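/- arXiv:2410.15910 — 2 statements merged into one kernel-verified Lean document; each statement's English description precedes it below -/
import Mathlib

section
/- Donsker–Varadhan lower bound: For any joint pmf p on a finite product X × Y with marginals p_X and p_Y, and any function T : X × Y → ℝ, the mutual information satisfies I(X;Y) ≥ ∑_{x,y} p(x,y) T(x,y) − log( ∑_{x,y} p_X(x) p_Y(y) e^{T(x,y)} ). -/
private lemma dv_pointwise (p q Z T : ℝ) (hp : 0 ≤ p) (hq : 0 ≤ q)
    (hpq : 0 < p → 0 < q) (hZ : 0 < Z) :
    p * T - p * Real.log Z ≤ p * Real.log (p / q) + q * Real.exp T / Z - p := by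
  rcases hp.eq_or_lt with h | h
  · have : 0 ≤ q * Real.exp T / Z := by positivity
    simp [← h]
    linarith
  · have hq' : 0 < q := hpq h
    have ht : (0:ℝ) < q * Real.exp T / (Z * p) := by positivity
    have h1 := Real.log_le_sub_one_of_pos ht
    have hlog : Real.log (q * Real.exp T / (Z * p))
        = Real.log q + T - Real.log Z - Real.log p := by
      rw [Real.log_div (by positivity) (by positivity), Real.log_mul hq'.ne' (Real.exp_pos T).ne',
        Real.log_mul hZ.ne' h.ne', Real.log_exp]
      ring
    have hlogpq : Real.log (p / q) = Real.log p - Real.log q :=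
      Real.log_div h.ne' hq'.ne'
    have key := mul_le_mul_of_nonneg_left h1 hp
    rw [hlog] at key
    have hexp : p * (q * Real.exp T / (Z * p) - 1) = q * Real.exp T / Z - p := by
      field_simp
    rw [hexp] at key
    rw [hlogpq]
    nlinarith [key]

private lemma dv_general {ι : Type*} [Fintype ι] (f g T : ι → ℝ)
    (hf0 : ∀ i, 0 ≤ f i) (hf1 : ∑ i, f i = 1)
    (hg0 : ∀ i, 0 ≤ g i) (hg1 : ∑ i, g i = 1)
    (hfg : ∀ i, 0 < f i → 0 < g i) :
    (∑ i, f i * T i) - Real.log (∑ i, g i * Real.exp (T i))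
      ≤ ∑ i, f i * Real.log (f i / g i) := by
  set Z := ∑ i, g i * Real.exp (T i) with hZdef
  have hZ : 0 < Z := by
    have hex : ∃ i, 0 < g i := by
      by_contra h
      push_neg at h
      have : ∑ i, g i = 0 :=
        Finset.sum_eq_zero (fun i _ => le_antisymm (h i) (hg0 i))
      rw [this] at hg1; norm_num at hg1
    obtain ⟨j, hj⟩ := hex
    refine Finset.sum_pos' (fun i _ => mul_nonneg (hg0 i) (Real.exp_pos _).le) ⟨j, Finset.mem_univ j, mul_pos hj (Real.exp_pos _)⟩
  have hsum : ∑ i, (f i * T i - f i * Real.log Z)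
      ≤ ∑ i, (f i * Real.log (f i / g i) + g i * Real.exp (T i) / Z - f i) :=
    Finset.sum_le_sum (fun i _ => dv_pointwise (f i) (g i) Z (T i)
      (hf0 i) (hg0 i) (hfg i) hZ)
  rw [Finset.sum_sub_distrib, ← Finset.sum_mul, hf1, one_mul] at hsum
  rw [Finset.sum_sub_distrib, Finset.sum_add_distrib, ← Finset.sum_div, ← hZdef,
    div_self hZ.ne', hf1] at hsum
  linarith

/-- Donsker–Varadhan lower bound: for any joint pmf `p` on a finite product `X × Y` with
marginals `p_X`, `p_Y`, and any function `T : X × Y → ℝ`, the mutual information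
`I(X;Y) = ∑ p(x,y) log (p(x,y)/(p_X(x)p_Y(y)))` satisfies
`I(X;Y) ≥ ∑ p(x,y) T(x,y) − log (∑ p_X(x) p_Y(y) e^{T(x,y)})`. -/
theorem donsker_varadhan_lower_bound {X Y : Type*} [Fintype X] [Fintype Y]
    (p : X → Y → ℝ)
    (hp0 : ∀ x y, 0 ≤ p x y) (hp1 : ∑ x, ∑ y, p x y = 1)
    (T : X → Y → ℝ) :
    (∑ x, ∑ y, p x y * T x y)
        - Real.log (∑ x, ∑ y, (∑ y', p x y') * (∑ x', p x' y) * Real.exp (T x y))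
      ≤ ∑ x, ∑ y, p x y * Real.log (p x y / ((∑ y', p x y') * (∑ x', p x' y))) := by
  have hpY1 : ∑ y, ∑ x, p x y = 1 := by rw [Finset.sum_comm]; exact hp1
  have key := dv_general (ι := X × Y)
    (fun i => p i.1 i.2)
    (fun i => (∑ y', p i.1 y') * (∑ x', p x' i.2))
    (fun i => T i.1 i.2)
    (fun i => hp0 i.1 i.2)
    (by rw [Fintype.sum_prod_type]; exact hp1)
    (fun i => mul_nonneg (Finset.sum_nonneg fun y _ => hp0 i.1 y)
      (Finset.sum_nonneg fun x _ => hp0 x i.2))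
    (by
      rw [Fintype.sum_prod_type]
      rw [show (∑ x, ∑ y, (∑ y', p x y') * (∑ x', p x' y))
          = (∑ x, ∑ y', p x y') * (∑ y, ∑ x', p x' y) by
        rw [Finset.sum_mul_sum]]
      rw [hp1, hpY1, one_mul])
    (fun i hi => by
      have h1 : 0 < ∑ y', p i.1 y' :=
        lt_of_lt_of_le hi (Finset.single_le_sum (fun y _ => hp0 i.1 y) (Finset.mem_univ i.2))
      have h2 : 0 < ∑ x', p x' i.2 :=
        lt_of_lt_of_le hi (Finset.single_le_sum (fun x _ => hp0 x i.2) (Finset.mem_univ i.1))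
      exact mul_pos h1 h2)
  rw [Fintype.sum_prod_type, Fintype.sum_prod_type, Fintype.sum_prod_type] at key
  exact key
end

section
/- The PMI-weighted BC population minimizer recovers the style-conditioned expert: for a joint pmf p on S × A × Z with p(s,z) := ∑_a p(s,a,z) and p(z) > 0, the loss L(π) = ∑_{s,a,z} p(s,a,z)·(p(z|s,a)/p(z))·(−log π(a|s,z)) is minimized over policies at π*(a|s,z) = p(s,a,z)·p(z|s,a) / ∑_{a'} p(s,a',z)·p(z|s,a'), for each (s,z) where the denominator is positive. -/
noncomputable def negLogTerm (w q : ℝ) : EReal :=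
  if w = 0 then 0 else if q = 0 then ⊤ else ((-(w * Real.log q) : ℝ) : EReal)

lemma negLogTerm_nonneg {w q : ℝ} (hw : 0 ≤ w) (hq0 : 0 ≤ q) (hq : q ≤ 1) :
    0 ≤ negLogTerm w q := by
  unfold negLogTerm
  split_ifs with h1 h2
  · exact le_refl 0
  · exact le_top
  · rw [← EReal.coe_zero, EReal.coe_le_coe_iff]
    have : Real.log q ≤ 0 := Real.log_nonpos hq0 hq
    nlinarith

/-- weighted Gibbs inequality in EReal form, per (s,z) block -/
lemma ereal_coe_sum {A : Type*} (s : Finset A) (f : A → ℝ) :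
    ((∑ a ∈ s, f a : ℝ) : EReal) = ∑ a ∈ s, ((f a : ℝ) : EReal) := by
  induction s using Finset.cons_induction with
  | empty => simp
  | cons a s ha ih => rw [Finset.sum_cons, Finset.sum_cons, EReal.coe_add, ih]

lemma gibbs_key {A : Type*} [Fintype A] (c πp πs : A → ℝ)
    (hc : ∀ a, 0 ≤ c a)
    (hπ0 : ∀ a, 0 ≤ πp a) (hπ1 : ∑ a, πp a = 1)
    (hs0 : ∀ a, 0 ≤ πs a) (hs1 : ∑ a, πs a = 1)
    (hs : ∀ a, c a ≠ 0 → πs a = c a / ∑ a', c a') :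
    ∑ a, negLogTerm (c a) (πs a) ≤ ∑ a, negLogTerm (c a) (πp a) := by
  have hπle1 : ∀ a, πp a ≤ 1 := by
    intro a
    rw [← hπ1]
    exact Finset.single_le_sum (fun i _ => hπ0 i) (Finset.mem_univ a)
  have hsle1 : ∀ a, πs a ≤ 1 := by
    intro a
    rw [← hs1]
    exact Finset.single_le_sum (fun i _ => hs0 i) (Finset.mem_univ a)
  by_cases hC : ∑ a', c a' ≤ 0
  · -- all weights zero
    have hall : ∀ a, c a = 0 := by
      intro a
      by_contra h
      have : 0 < ∑ a', c a' := Finset.sum_pos' (fun i _ => hc i)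
        ⟨a, Finset.mem_univ a, lt_of_le_of_ne (hc a) (Ne.symm h)⟩
      linarith
    simp [negLogTerm, hall]
  push_neg at hC
  by_cases hbad : ∃ a, c a ≠ 0 ∧ πp a = 0
  · -- RHS is ⊤
    obtain ⟨a0, ha0, hpa0⟩ := hbad
    have htop : negLogTerm (c a0) (πp a0) = ⊤ := by simp [negLogTerm, ha0, hpa0]
    have : (⊤ : EReal) ≤ ∑ a, negLogTerm (c a) (πp a) := by
      rw [← htop]
      exact Finset.single_le_sum
        (fun i _ => negLogTerm_nonneg (hc i) (hπ0 i) (hπle1 i)) (Finset.mem_univ a0)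
    exact le_trans le_top this
  push_neg at hbad
  -- all πp a > 0 where c a ≠ 0; both sides are real
  have hppos : ∀ a, c a ≠ 0 → 0 < πp a := fun a h =>
    lt_of_le_of_ne (hπ0 a) (Ne.symm (hbad a h))
  have hspos : ∀ a, c a ≠ 0 → 0 < πs a := by
    intro a h
    rw [hs a h]
    exact div_pos (lt_of_le_of_ne (hc a) (Ne.symm h)) hC
  set F : A → ℝ := fun a => if c a = 0 then 0 else -(c a * Real.log (πp a)) with hF
  set G : A → ℝ := fun a => if c a = 0 then 0 else -(c a * Real.log (πs a)) with hG
  have hR : ∑ a, negLogTerm (c a) (πp a) = ((∑ a, F a : ℝ) : EReal) := by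
    rw [ereal_coe_sum]
    apply Finset.sum_congr rfl
    intro a _
    by_cases h : c a = 0
    · simp [negLogTerm, hF, h]
    · simp [negLogTerm, hF, h, (hppos a h).ne']
  have hL : ∑ a, negLogTerm (c a) (πs a) = ((∑ a, G a : ℝ) : EReal) := by
    rw [ereal_coe_sum]
    apply Finset.sum_congr rfl
    intro a _
    by_cases h : c a = 0
    · simp [negLogTerm, hG, h]
    · simp [negLogTerm, hG, h, (hspos a h).ne']
  rw [hL, hR, EReal.coe_le_coe_iff]
  -- real Gibbs: ∑ G ≤ ∑ F
  have key : ∀ a, F a - G a ≥ (c a) - (∑ a', c a') * πp a →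
      True := fun _ _ => trivial
  have step : ∀ a, (∑ a', c a') * πp a - c a ≥ G a - F a := by
    intro a
    by_cases h : c a = 0
    · simp only [hF, hG, h, if_true, sub_zero, h]
      simp [h]
      nlinarith [hπ0 a, hC]
    · have hca : 0 < c a := lt_of_le_of_ne (hc a) (Ne.symm h)
      have h1 : G a - F a = c a * Real.log (πp a / πs a) := by
        rw [hF, hG]
        simp only [h, if_false]
        rw [Real.log_div (hppos a h).ne' (hspos a h).ne']
        ring
      rw [h1]
      have h2 : Real.log (πp a / πs a) ≤ πp a / πs a - 1 :=
        Real.log_le_sub_one_of_pos (div_pos (hppos a h) (hspos a h))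
      have h3 : c a * Real.log (πp a / πs a) ≤ c a * (πp a / πs a - 1) := by
        exact mul_le_mul_of_nonneg_left h2 (hc a)
      have h4 : c a * (πp a / πs a - 1) = (∑ a', c a') * πp a - c a := by
        rw [hs a h]
        field_simp
      linarith
  have hsum : ∑ a, (G a - F a) ≤ ∑ a, ((∑ a', c a') * πp a - c a) :=
    Finset.sum_le_sum (fun a _ => step a)
  have hrhs : ∑ a, ((∑ a', c a') * πp a - c a) = 0 := by
    rw [Finset.sum_sub_distrib, ← Finset.mul_sum, hπ1]
    ring
  rw [hrhs, Finset.sum_sub_distrib] at hsum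
  linarith

/-- The PMI-weighted BC population minimizer: for a joint pmf `p` on `S × A × Z` with all
`p(z) > 0`, the loss `L(π) = ∑ p(s,a,z)·(p(z|s,a)/p(z))·(−log π(a|s,z))` is minimized over
policies at `π*(a|s,z) = p(s,a,z)·p(z|s,a) / ∑_{a'} p(s,a',z)·p(z|s,a')` for each `(s,z)`
where the denominator is positive. -/
theorem bcpmi_population_minimizer {S A Z : Type*} [Fintype S] [Fintype A] [Fintype Z]
    (p : S → A → Z → ℝ)
    (hp0 : ∀ s a z, 0 ≤ p s a z) (hp1 : ∑ s, ∑ a, ∑ z, p s a z = 1)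
    (hZ : ∀ z, 0 < ∑ s', ∑ a', p s' a' z)
    (π πstar : S → Z → A → ℝ)
    (hπ0 : ∀ s z a, 0 ≤ π s z a) (hπ1 : ∀ s z, ∑ a, π s z a = 1)
    (hπstar0 : ∀ s z a, 0 ≤ πstar s z a) (hπstar1 : ∀ s z, ∑ a, πstar s z a = 1)
    (hstar : ∀ s z, 0 < ∑ a', p s a' z * (p s a' z / ∑ z', p s a' z') →
      ∀ a, πstar s z a
        = p s a z * (p s a z / ∑ z', p s a z')
            / ∑ a', p s a' z * (p s a' z / ∑ z', p s a' z')) :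
    ∑ s, ∑ a, ∑ z,
        negLogTerm
          (p s a z * ((p s a z / ∑ z', p s a z') / (∑ s', ∑ a', p s' a' z)))
          (πstar s z a)
      ≤ ∑ s, ∑ a, ∑ z,
          negLogTerm
            (p s a z * ((p s a z / ∑ z', p s a z') / (∑ s', ∑ a', p s' a' z)))
            (π s z a) := by
  have hcomm : ∀ (q : S → Z → A → ℝ),
      (∑ s, ∑ a, ∑ z, negLogTerm
        (p s a z * ((p s a z / ∑ z', p s a z') / (∑ s', ∑ a', p s' a' z))) (q s z a))
      = ∑ s, ∑ z, ∑ a, negLogTerm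
        (p s a z * ((p s a z / ∑ z', p s a z') / (∑ s', ∑ a', p s' a' z))) (q s z a) := by
    intro q
    exact Finset.sum_congr rfl (fun s _ => Finset.sum_comm)
  rw [hcomm π, hcomm πstar]
  apply Finset.sum_le_sum
  intro s _
  apply Finset.sum_le_sum
  intro z _
  set c : A → ℝ := fun a =>
    p s a z * ((p s a z / ∑ z', p s a z') / (∑ s', ∑ a', p s' a' z)) with hcdef
  have hc : ∀ a, 0 ≤ c a := by
    intro a
    apply mul_nonneg (hp0 s a z)
    apply div_nonneg (div_nonneg (hp0 s a z) _) (hZ z).le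
    exact Finset.sum_nonneg (fun z' _ => hp0 s a z')
  apply gibbs_key c (π s z) (πstar s z) hc (hπ0 s z) (hπ1 s z) (hπstar0 s z) (hπstar1 s z)
  intro a ha
  set D := ∑ a', p s a' z * (p s a' z / ∑ z', p s a' z') with hDdef
  set pZ := ∑ s', ∑ a', p s' a' z with hpZ
  have hpZpos : 0 < pZ := hZ z
  have hcform : ∀ a', c a' = (p s a' z * (p s a' z / ∑ z', p s a' z')) / pZ := by
    intro a'; rw [hcdef]; ring
  have hsumc : ∑ a', c a' = D / pZ := by
    rw [Finset.sum_congr rfl (fun a' _ => hcform a'), ← Finset.sum_div]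
  have hterm_nonneg : ∀ a', 0 ≤ p s a' z * (p s a' z / ∑ z', p s a' z') := by
    intro a'
    exact mul_nonneg (hp0 s a' z)
      (div_nonneg (hp0 s a' z) (Finset.sum_nonneg (fun z' _ => hp0 s a' z')))
  have hnum_ne : p s a z * (p s a z / ∑ z', p s a z') ≠ 0 := by
    intro h
    apply ha
    rw [hcform a, h, zero_div]
  have hD : 0 < D := by
    apply Finset.sum_pos' (fun i _ => hterm_nonneg i)
    exact ⟨a, Finset.mem_univ a, lt_of_le_of_ne (hterm_nonneg a) (Ne.symm hnum_ne)⟩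
  rw [hstar s z hD a, hsumc, hcform a]
  rw [← hDdef]
  rw [div_div_div_cancel_right₀ hpZpos.ne']
end
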